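/- arXiv:2602.05225 — 4 statements merged into one kernel-verified Lean document; each statement's English description precedes it below -/
import Mathlib

section
/- Let (Y, ρ) be a separable metric space, μ a Borel probability measure on Y with support S, and ℓ : Y × Y → [0, ∞) a measurable loss function such that ℓ(y, y') ≤ L for all y, y' ∈ Y, |ℓ(y, y') − ℓ(y, y'')| ≤ c·ℓ(y', y'') for all y, y', y'' ∈ Y and a finite constant c, and ℓ(y, y') ≤ ρ(y, y')^α for some α > 0. Let Y₁, Y₂, … and Y'₁, Y'₂, … be i.i.d. random elements with distribution μ, and define the risk R(y) = E[ℓ(Y₁, y)]. Assume there exists a Fréchet mean m̄_Fr ∈ Y minimizing R over Y, and that m̄_Fr ∈ S. For each n, let m̄_n be any element of {Y'₁, …, Y'ₙ} minimizing y ↦ Σ_{i=1}^n ℓ(Y_i, y) over {Y'₁, …, Y'ₙ}. Then R(m̄_n) → R(m̄_Fr) almost surely as n → ∞. -/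
open MeasureTheory ProbabilityTheory Filter
open Real

/-- The support of a Borel measure on a metric space: the set of points all of whose
open balls have positive measure. On a separable metric space this is the smallest
closed set of full measure. -/
def measureSupport {Y : Type*} [MetricSpace Y] [MeasurableSpace Y]
    (μ : Measure Y) : Set Y :=
  {y | ∀ ε : ℝ, 0 < ε → 0 < μ (Metric.ball y ε)}

section Aux
variable {Ω : Type*} [MeasurableSpace Ω] {P : Measure Ω} [IsProbabilityMeasure P]

lemma my_integrable_of_abs_le {f : Ω → ℝ} (hf : Measurable f) {C : ℝ}
    (h : ∀ ω, |f ω| ≤ C) : Integrable f P := by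
  refine Integrable.mono' (integrable_const C) hf.aestronglyMeasurable ?_
  exact Eventually.of_forall fun ω => (by simpa using h ω)

lemma my_exp_le {x : ℝ} (hx : |x| ≤ 1) : Real.exp x ≤ 1 + x + x ^ 2 := by
  have h := Real.exp_bound hx (by norm_num : 0 < 2)
  have h2 : |Real.exp x - (1 + x)| ≤ |x| ^ 2 * (3 / 4) := by
    have : (∑ i ∈ Finset.range 2, x ^ i / (Nat.factorial i : ℝ)) = 1 + x := by
      simp [Finset.sum_range_succ]
    rw [this] at h
    convert h using 2
    norm_num [Nat.factorial]
  have h3 : Real.exp x - (1 + x) ≤ |x| ^ 2 * (3 / 4) := (abs_le.1 h2).2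
  have h4 : |x| ^ 2 = x ^ 2 := sq_abs x
  nlinarith [sq_nonneg x]

lemma my_mgf_le {X : Ω → ℝ} (hX : Measurable X) {L t : ℝ} (hL : 0 < L)
    (hbdd : ∀ ω, |X ω| ≤ L) (hmean : ∫ ω, X ω ∂P = 0)
    (ht : 0 ≤ t) (htL : t * L ≤ 1) :
    mgf X P t ≤ Real.exp (t ^ 2 * L ^ 2) := by
  have habs : ∀ ω, |t * X ω| ≤ 1 := fun ω => by
    rw [abs_mul, abs_of_nonneg ht]
    calc t * |X ω| ≤ t * L := by gcongr; exact hbdd ω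
    _ ≤ 1 := htL
  have hpt : ∀ ω, Real.exp (t * X ω) ≤ 1 + t * X ω + (t * X ω) ^ 2 :=
    fun ω => my_exp_le (habs ω)
  have hXint : Integrable X P := my_integrable_of_abs_le hX (hbdd ·)
  have hsq : ∀ ω, (X ω) ^ 2 ≤ L ^ 2 := fun ω => by
    rw [← sq_abs]
    exact pow_le_pow_left₀ (abs_nonneg _) (hbdd ω) 2
  have hX2int : Integrable (fun ω => (X ω) ^ 2) P := by
    refine my_integrable_of_abs_le (by fun_prop) (C := L ^ 2) fun ω => ?_
    rw [abs_of_nonneg (sq_nonneg _)]; exact hsq ω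
  have hT2int : Integrable (fun ω => (t * X ω) ^ 2) P := by
    have : (fun ω => (t * X ω) ^ 2) = fun ω => t ^ 2 * (X ω) ^ 2 := by
      funext ω; ring
    rw [this]; exact hX2int.const_mul _
  have hexpint : Integrable (fun ω => Real.exp (t * X ω)) P := by
    refine my_integrable_of_abs_le (by fun_prop) (C := Real.exp 1) fun ω => ?_
    rw [abs_of_pos (Real.exp_pos _)]
    exact Real.exp_le_exp.2 ((le_abs_self _).trans (habs ω))
  have i1 : Integrable (fun ω => 1 + t * X ω) P := (integrable_const 1).add (hXint.const_mul t)
  have h1 : mgf X P t ≤ ∫ ω, ((1 + t * X ω) + (t * X ω) ^ 2) ∂P := by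
    rw [mgf]
    exact integral_mono hexpint (i1.add hT2int) hpt
  have h2 : ∫ ω, ((1 + t * X ω) + (t * X ω) ^ 2) ∂P = 1 + t ^ 2 * ∫ ω, (X ω) ^ 2 ∂P := by
    rw [integral_add i1 hT2int, integral_add (integrable_const 1) (hXint.const_mul t)]
    simp only [integral_const, measure_univ, probReal_univ, ENNReal.toReal_one, smul_eq_mul, one_mul]
    rw [integral_const_mul, hmean]
    have : (fun ω => (t * X ω) ^ 2) = fun ω => t ^ 2 * (X ω) ^ 2 := by funext ω; ring
    rw [this, integral_const_mul]
    ring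
  have h3 : ∫ ω, (X ω) ^ 2 ∂P ≤ L ^ 2 := by
    calc ∫ ω, (X ω) ^ 2 ∂P ≤ ∫ _, L ^ 2 ∂P := integral_mono hX2int (integrable_const _) hsq
      _ = L ^ 2 := by simp
  have h4 : 1 + t ^ 2 * ∫ ω, (X ω) ^ 2 ∂P ≤ 1 + t ^ 2 * L ^ 2 := by nlinarith [sq_nonneg t]
  calc mgf X P t ≤ 1 + t ^ 2 * L ^ 2 := by rw [h2] at h1; linarith
    _ ≤ Real.exp (t ^ 2 * L ^ 2) := by
        have := Real.add_one_le_exp (t ^ 2 * L ^ 2); linarith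

lemma my_chernoff {ι : Type*} {X : ι → Ω → ℝ}
    (hindep : iIndepFun X P)
    (hmeas : ∀ i, Measurable (X i)) {L t : ℝ} (hL : 0 < L)
    (hbdd : ∀ i ω, |X i ω| ≤ L) (hmean : ∀ i, ∫ ω, X i ω ∂P = 0)
    (s : Finset ι) (ε : ℝ) (ht : 0 ≤ t) (htL : t * L ≤ 1) :
    (P {ω | (s.card : ℝ) * ε ≤ ∑ i ∈ s, X i ω}).toReal
      ≤ Real.exp ((s.card : ℝ) * (t ^ 2 * L ^ 2 - t * ε)) := by
  classical
  have hSmeas : Measurable (∑ i ∈ s, X i) := by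
    have : (∑ i ∈ s, X i) = fun ω => ∑ i ∈ s, X i ω := by
      funext ω; simp [Finset.sum_apply]
    rw [this]
    exact Finset.measurable_sum s fun i _ => hmeas i
  have hint : Integrable (fun ω => Real.exp (t * (∑ i ∈ s, X i) ω)) P := by
    refine my_integrable_of_abs_le (by fun_prop) (C := Real.exp (t * (s.card * L))) fun ω => ?_
    rw [abs_of_pos (Real.exp_pos _)]
    apply Real.exp_le_exp.2
    have : |(∑ i ∈ s, X i) ω| ≤ s.card * L := by
      rw [Finset.sum_apply]
      calc |∑ i ∈ s, X i ω| ≤ ∑ i ∈ s, |X i ω| := Finset.abs_sum_le_sum_abs _ _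
        _ ≤ ∑ _i ∈ s, L := Finset.sum_le_sum fun i _ => hbdd i ω
        _ = s.card * L := by rw [Finset.sum_const, nsmul_eq_mul]
    calc t * (∑ i ∈ s, X i) ω ≤ t * |(∑ i ∈ s, X i) ω| := by
          gcongr; exact le_abs_self _
      _ ≤ t * (s.card * L) := by gcongr
  have hch := measure_ge_le_exp_mul_mgf (X := ∑ i ∈ s, X i) (μ := P)
    ((s.card : ℝ) * ε) ht hint
  have hmgf : mgf (∑ i ∈ s, X i) P t ≤ Real.exp ((s.card : ℝ) * (t ^ 2 * L ^ 2)) := by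
    rw [hindep.mgf_sum hmeas s]
    calc ∏ i ∈ s, mgf (X i) P t ≤ ∏ _i ∈ s, Real.exp (t ^ 2 * L ^ 2) := by
          refine Finset.prod_le_prod (fun i _ => mgf_nonneg) fun i _ => ?_
          exact my_mgf_le (hmeas i) hL (hbdd i) (hmean i) ht htL
      _ = Real.exp ((s.card : ℝ) * (t ^ 2 * L ^ 2)) := by
          rw [Finset.prod_const, ← Real.exp_nat_mul]
  have heq : {ω | (s.card : ℝ) * ε ≤ ∑ i ∈ s, X i ω}
      = {ω | (s.card : ℝ) * ε ≤ (∑ i ∈ s, X i) ω} := by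
    ext ω; simp [Finset.sum_apply]
  rw [heq]
  calc (P {ω | (s.card : ℝ) * ε ≤ (∑ i ∈ s, X i) ω}).toReal
      ≤ Real.exp (-t * ((s.card : ℝ) * ε)) * mgf (∑ i ∈ s, X i) P t := hch
    _ ≤ Real.exp (-t * ((s.card : ℝ) * ε)) * Real.exp ((s.card : ℝ) * (t ^ 2 * L ^ 2)) := by
        gcongr
    _ = Real.exp ((s.card : ℝ) * (t ^ 2 * L ^ 2 - t * ε)) := by
        rw [← Real.exp_add]; ring_nf

lemma my_dev_bound {Y : Type*} [MetricSpace Y] [MeasurableSpace Y] [BorelSpace Y]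
    (μ : Measure Y) [IsProbabilityMeasure μ]
    {Ω : Type*} [MeasurableSpace Ω] (P : Measure Ω) [IsProbabilityMeasure P]
    (ℓ : Y → Y → ℝ) (hℓmeas : Measurable fun p : Y × Y => ℓ p.1 p.2)
    {L : ℝ} (hL : 0 < L) (hℓbdd : ∀ y y', |ℓ y y'| ≤ L)
    (Yseq Y'seq : ℕ → Ω → Y)
    (hYmeas : ∀ i, Measurable (Yseq i)) (hY'meas : ∀ i, Measurable (Y'seq i))
    (hYdist : ∀ i, Measure.map (Yseq i) P = μ)
    (hY'dist : ∀ i, Measure.map (Y'seq i) P = μ)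
    (hindep : iIndepFun (Sum.elim Yseq Y'seq) P)
    (R : Y → ℝ) (hR : ∀ y, R y = ∫ z, ℓ z y ∂μ)
    {t ε₀ : ℝ} (ht : 0 ≤ t) (htL : t * (2 * L) ≤ 1)
    (n i : ℕ) (hin : i < n) :
    P {ω | (n : ℝ) * ε₀ ≤ ∑ j ∈ Finset.range n, (R (Y'seq i ω) - ℓ (Yseq j ω) (Y'seq i ω))}
      ≤ ENNReal.ofReal (Real.exp ((n : ℝ) * (t ^ 2 * (2 * L) ^ 2 - t * ε₀))) := by
  classical
  set bnd : ℝ := Real.exp ((n : ℝ) * (t ^ 2 * (2 * L) ^ 2 - t * ε₀)) with hbnd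
  -- measurability of R
  have hℓy : ∀ y : Y, Measurable fun z => ℓ z y := fun y =>
    hℓmeas.comp (measurable_id.prodMk measurable_const)
  have hRmeas : Measurable R := by
    have h1 : Measurable fun y => ∫ z, ℓ z y ∂μ := by
      have hsm : StronglyMeasurable fun p : Y × Y => ℓ p.2 p.1 :=
        (hℓmeas.comp measurable_swap).stronglyMeasurable
      exact hsm.integral_prod_right'.measurable
    have : R = fun y => ∫ z, ℓ z y ∂μ := funext hR
    rw [this]; exact h1
  have hRabs : ∀ y, |R y| ≤ L := by
    intro y
    have h1 : |∫ z, ℓ z y ∂μ| ≤ ∫ z, |ℓ z y| ∂μ := by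
      simpa using norm_integral_le_integral_norm (fun z => ℓ z y) (μ := μ)
    have h2 : ∫ z, |ℓ z y| ∂μ ≤ ∫ _, L ∂μ := by
      refine integral_mono ((my_integrable_of_abs_le (hℓy y)
        (fun z => hℓbdd z y)).abs) (integrable_const _) fun z => ?_
      simpa using hℓbdd z y
    rw [hR y]
    simpa using h1.trans h2
  -- the per-y Chernoff bound
  have hy : ∀ y : Y,
      P {ω | (n : ℝ) * ε₀ ≤ ∑ j ∈ Finset.range n, (R y - ℓ (Yseq j ω) y)}
        ≤ ENNReal.ofReal bnd := by
    intro y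
    set g : ℕ ⊕ ℕ → Y → ℝ := Sum.elim (fun _ z => R y - ℓ z y) (fun _ _ => 0) with hg
    have hgmeas : ∀ k, Measurable (g k) := by
      rintro (j | j)
      · exact measurable_const.sub (hℓy y)
      · exact measurable_const
    set X : ℕ ⊕ ℕ → Ω → ℝ := fun k => g k ∘ Sum.elim Yseq Y'seq k with hX
    have hXindep : iIndepFun X P := hindep.comp g hgmeas
    have hXmeas : ∀ k, Measurable (X k) := by
      rintro (j | j)
      · exact (hgmeas _).comp (hYmeas j)
      · exact (hgmeas _).comp (hY'meas j)
    have hXbdd : ∀ k ω, |X k ω| ≤ 2 * L := by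
      rintro (j | j) ω
      · show |R y - ℓ (Yseq j ω) y| ≤ 2 * L
        calc |R y - ℓ (Yseq j ω) y| ≤ |R y| + |ℓ (Yseq j ω) y| := abs_sub _ _
          _ ≤ L + L := add_le_add (hRabs y) (hℓbdd _ _)
          _ = 2 * L := by ring
      · show |(0 : ℝ)| ≤ 2 * L
        simp; linarith
    have hXmean : ∀ k, ∫ ω, X k ω ∂P = 0 := by
      rintro (j | j)
      · show ∫ ω, (R y - ℓ (Yseq j ω) y) ∂P = 0
        have hint : Integrable (fun ω => ℓ (Yseq j ω) y) P :=
          my_integrable_of_abs_le ((hℓy y).comp (hYmeas j)) fun ω => hℓbdd _ _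
        rw [integral_sub (integrable_const _) hint]
        have : ∫ ω, ℓ (Yseq j ω) y ∂P = ∫ z, ℓ z y ∂μ := by
          rw [← hYdist j, integral_map (hYmeas j).aemeasurable
            (hℓy y).aestronglyMeasurable]
        rw [this, ← hR y]
        simp
      · show ∫ _ω, (0 : ℝ) ∂P = 0
        simp
    set s : Finset (ℕ ⊕ ℕ) := (Finset.range n).image Sum.inl with hs
    have hcard : s.card = n := by
      rw [hs, Finset.card_image_of_injective _ Sum.inl_injective, Finset.card_range]
    have hch := my_chernoff hXindep hXmeas (by linarith : (0:ℝ) < 2 * L) hXbdd hXmean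
      s ε₀ ht htL
    rw [hcard] at hch
    have hsum : ∀ ω, ∑ k ∈ s, X k ω = ∑ j ∈ Finset.range n, (R y - ℓ (Yseq j ω) y) := by
      intro ω
      rw [hs, Finset.sum_image (fun a _ b _ h => Sum.inl_injective h)]
      rfl
    have heq : {ω | (n : ℝ) * ε₀ ≤ ∑ j ∈ Finset.range n, (R y - ℓ (Yseq j ω) y)}
        = {ω | (n : ℝ) * ε₀ ≤ ∑ k ∈ s, X k ω} := by
      ext ω; simp [hsum ω]
    rw [heq]
    exact (ENNReal.le_ofReal_iff_toReal_le (measure_ne_top P _) (Real.exp_nonneg _)).2 hch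
  -- the Fubini step
  set Yvec : Ω → (Fin n → Y) := fun ω j => Yseq j ω with hYvec
  have hYvecmeas : Measurable Yvec :=
    measurable_pi_lambda _ fun j => hYmeas j
  -- independence of Y'seq i from the vector of the first n Yseq's
  have hIndepT : IndepFun (Y'seq i) Yvec P := by
    set S : Finset (ℕ ⊕ ℕ) := {Sum.inr i} with hS
    set T : Finset (ℕ ⊕ ℕ) := (Finset.range n).image Sum.inl with hT
    have hST : Disjoint S T := by
      rw [Finset.disjoint_left]
      rintro (j | j) hj1 hj2
      · simp [hS] at hj1
      · simp [hT] at hj2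
    have hfmeas : ∀ k, Measurable (Sum.elim Yseq Y'seq k) := by
      rintro (j | j)
      · exact hYmeas j
      · exact hY'meas j
    have hbase := hindep.indepFun_finset S T hST hfmeas
    have hiS : (Sum.inr i : ℕ ⊕ ℕ) ∈ S := by simp [hS]
    set φ : (∀ _k : {x // x ∈ S}, Y) → Y := fun v => v ⟨Sum.inr i, hiS⟩ with hφ
    set ψ : (∀ _k : {x // x ∈ T}, Y) → (Fin n → Y) :=
      fun v j => v ⟨Sum.inl (j : ℕ), by simp [hT, j.2]⟩ with hψ
    have hφm : Measurable φ := measurable_pi_apply _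
    have hψm : Measurable ψ := measurable_pi_lambda _ fun j => measurable_pi_apply _
    have := hbase.comp hφm hψm
    exact this
  have hTmeas : Measurable fun ω => (Y'seq i ω, Yvec ω) :=
    (hY'meas i).prodMk hYvecmeas
  set ν : Measure (Fin n → Y) := Measure.map Yvec P with hν
  haveI : IsProbabilityMeasure ν := Measure.isProbabilityMeasure_map hYvecmeas.aemeasurable
  have hmapT : Measure.map (fun ω => (Y'seq i ω, Yvec ω)) P = μ.prod ν := by
    rw [(indepFun_iff_map_prod_eq_prod_map_map (hY'meas i).aemeasurable
      hYvecmeas.aemeasurable).1 hIndepT, hY'dist i]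
  set A : Set (Y × (Fin n → Y)) :=
    {q | (n : ℝ) * ε₀ ≤ ∑ j : Fin n, (R q.1 - ℓ (q.2 j) q.1)} with hA
  have hAmeas : MeasurableSet A := by
    refine measurableSet_le measurable_const ?_
    refine Finset.measurable_sum _ fun j _ => ?_
    have h1 : Measurable fun q : Y × (Fin n → Y) => ℓ (q.2 j) q.1 := by
      have := hℓmeas.comp
        ((((measurable_pi_apply j).comp measurable_snd).prodMk measurable_fst) :
          Measurable fun q : Y × (Fin n → Y) => ((q.2 j, q.1) : Y × Y))
      exact this
    exact (hRmeas.comp measurable_fst).sub h1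
  have hEeq : {ω | (n : ℝ) * ε₀ ≤ ∑ j ∈ Finset.range n, (R (Y'seq i ω) - ℓ (Yseq j ω) (Y'seq i ω))}
      = (fun ω => (Y'seq i ω, Yvec ω)) ⁻¹' A := by
    ext ω
    simp only [Set.mem_setOf_eq, Set.mem_preimage, hA, hYvec]
    rw [Fin.sum_univ_eq_sum_range (fun j => R (Y'seq i ω) - ℓ (Yseq j ω) (Y'seq i ω)) n]
  rw [hEeq, ← Measure.map_apply hTmeas hAmeas, hmapT, Measure.prod_apply hAmeas]
  have hsec : ∀ y : Y, ν (Prod.mk y ⁻¹' A) ≤ ENNReal.ofReal bnd := by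
    intro y
    rw [hν, Measure.map_apply hYvecmeas (hAmeas.preimage measurable_prodMk_left)]
    have : Yvec ⁻¹' (Prod.mk y ⁻¹' A)
        = {ω | (n : ℝ) * ε₀ ≤ ∑ j ∈ Finset.range n, (R y - ℓ (Yseq j ω) y)} := by
      ext ω
      simp only [Set.mem_preimage, Set.mem_setOf_eq, hA, hYvec]
      rw [Fin.sum_univ_eq_sum_range (fun j => R y - ℓ (Yseq j ω) y) n]
    rw [this]
    exact hy y
  calc ∫⁻ y, ν (Prod.mk y ⁻¹' A) ∂μ ≤ ∫⁻ _, ENNReal.ofReal bnd ∂μ :=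
        lintegral_mono fun y => hsec y
    _ = ENNReal.ofReal bnd := by simp


end Aux

set_option maxHeartbeats 1000000 in
/-- **Theorem 1 of the paper.** Strong consistency of the quantized
Fréchet mean estimator: on a separable metric space, if the measurable loss `ℓ` is
nonnegative, bounded by `L`, satisfies conditions (tr) and (lr), the sequences
`Y₁, Y₂, …` and `Y'₁, Y'₂, …` are all i.i.d. with distribution `μ`, the risk
`R(y) = E[ℓ(Y₁, y)]` is minimized over `Y` at a Fréchet mean `m̄_Fr` belonging to the
support of `μ`, and for each `n ≥ 1` the estimator `m̄ₙ` is an element of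
`{Y'₁, …, Y'ₙ}` minimizing `y ↦ Σ_{i=1}^n ℓ(Yᵢ, y)` over `{Y'₁, …, Y'ₙ}`, then
`R(m̄ₙ) → R(m̄_Fr)` almost surely. -/
theorem frechet_mean_estimator_strongly_consistent
    {Y : Type*} [MetricSpace Y] [TopologicalSpace.SeparableSpace Y]
    [MeasurableSpace Y] [BorelSpace Y]
    (μ : Measure Y) [IsProbabilityMeasure μ]
    {Ω : Type*} [MeasurableSpace Ω] (P : Measure Ω) [IsProbabilityMeasure P]
    (ℓ : Y → Y → ℝ) (hℓmeas : Measurable fun p : Y × Y => ℓ p.1 p.2)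
    (hℓ0 : ∀ y y', 0 ≤ ℓ y y') (L : ℝ) (hℓL : ∀ y y', ℓ y y' ≤ L)
    (c : ℝ) (htr : ∀ y y' y'', |ℓ y y' - ℓ y y''| ≤ c * ℓ y' y'')
    (α : ℝ) (hα : 0 < α) (hlr : ∀ y y', ℓ y y' ≤ dist y y' ^ α)
    -- the two i.i.d. sequences, jointly independent, with common distribution `μ`
    (Yseq Y'seq : ℕ → Ω → Y)
    (hYmeas : ∀ i, Measurable (Yseq i)) (hY'meas : ∀ i, Measurable (Y'seq i))
    (hYdist : ∀ i, Measure.map (Yseq i) P = μ)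
    (hY'dist : ∀ i, Measure.map (Y'seq i) P = μ)
    (hindep : iIndepFun (Sum.elim Yseq Y'seq) P)
    -- the risk and the Fréchet mean
    (R : Y → ℝ) (hR : ∀ y, R y = ∫ z, ℓ z y ∂μ)
    (mFr : Y) (hmFr : ∀ y : Y, R mFr ≤ R y)
    (hmFrS : mFr ∈ measureSupport μ)
    -- the estimator: an element of `{Y'₁, …, Y'ₙ}` minimizing the empirical risk there
    (mbar : ℕ → Ω → Y)
    (hmem : ∀ n (ω : Ω), 0 < n → ∃ i < n, mbar n ω = Y'seq i ω)
    (hminz : ∀ n (ω : Ω), 0 < n → ∀ i < n,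
      ∑ j ∈ Finset.range n, ℓ (Yseq j ω) (mbar n ω)
        ≤ ∑ j ∈ Finset.range n, ℓ (Yseq j ω) (Y'seq i ω)) :
    ∀ᵐ ω ∂P, Tendsto (fun n => R (mbar n ω)) atTop (nhds (R mFr)) := by
  classical
  -- normalized constants
  set L' : ℝ := max L 1 with hL'def
  have hL' : 0 < L' := lt_of_lt_of_le one_pos (le_max_right L 1)
  have hℓL' : ∀ y y', ℓ y y' ≤ L' := fun y y' => (hℓL y y').trans (le_max_left L 1)
  have hℓbdd : ∀ y y', |ℓ y y'| ≤ L' := fun y y' => by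
    rw [abs_of_nonneg (hℓ0 y y')]; exact hℓL' y y'
  set c' : ℝ := max c 1 with hc'def
  have hc' : 0 < c' := lt_of_lt_of_le one_pos (le_max_right c 1)
  have hℓy : ∀ y : Y, Measurable fun z => ℓ z y := fun y =>
    hℓmeas.comp (measurable_id.prodMk measurable_const)
  have hRbound : ∀ y, R y ≤ L' := by
    intro y
    rw [hR y]
    calc ∫ z, ℓ z y ∂μ ≤ ∫ _, L' ∂μ := by
          refine integral_mono (my_integrable_of_abs_le (hℓy y) fun z => hℓbdd z y)
            (integrable_const _) fun z => hℓL' z y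
      _ = L' := by simp
  -- the main eventual bound for a fixed ε
  have key : ∀ ε : ℝ, 0 < ε →
      ∀ᵐ ω ∂P, ∀ᶠ n in atTop, R (mbar n ω) ≤ R mFr + ε := by
    intro ε hε
    set ε₀ : ℝ := ε / 3 with hε₀def
    have hε₀ : 0 < ε₀ := by positivity
    -- choice of δ
    set m : ℝ := min 1 (ε₀ / c') with hmdef
    have hm : 0 < m := lt_min one_pos (div_pos hε₀ hc')
    set δ : ℝ := m ^ (α⁻¹) with hδdef
    have hδpos : 0 < δ := Real.rpow_pos_of_pos hm _
    have hδα : δ ^ α = m := by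
      rw [hδdef, ← Real.rpow_mul hm.le, inv_mul_cancel₀ hα.ne', Real.rpow_one]
    have hδbound : c' * δ ^ α ≤ ε₀ := by
      rw [hδα]
      calc c' * m ≤ c' * (ε₀ / c') := by
            exact mul_le_mul_of_nonneg_left (min_le_right _ _) hc'.le
        _ = ε₀ := by field_simp
    set B : Set Y := Metric.ball mFr δ with hBdef
    have hBmeas : MeasurableSet B := Metric.isOpen_ball.measurableSet
    have hμB : 0 < μ B := hmFrS δ hδpos
    -- choice of t
    set Lb : ℝ := 2 * L' with hLbdef
    have hLb : 0 < Lb := by positivity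
    set t : ℝ := min (ε₀ / (2 * Lb ^ 2)) (1 / Lb) with htdef
    have ht : 0 < t := lt_min (by positivity) (by positivity)
    have htL : t * Lb ≤ 1 := by
      have h1 : t ≤ 1 / Lb := min_le_right _ _
      calc t * Lb ≤ (1 / Lb) * Lb := by gcongr
        _ = 1 := by field_simp
    have htexp : t ^ 2 * Lb ^ 2 - t * ε₀ ≤ -(t * ε₀ / 2) := by
      have h1 : t ≤ ε₀ / (2 * Lb ^ 2) := min_le_left _ _
      have h2 : t ^ 2 * Lb ^ 2 ≤ t * ε₀ / 2 := by
        have h3 : t * t ≤ t * (ε₀ / (2 * Lb ^ 2)) := by gcongr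
        have h4 := mul_le_mul_of_nonneg_right h3 (sq_nonneg Lb)
        have h5 : t * (ε₀ / (2 * Lb ^ 2)) * Lb ^ 2 = t * ε₀ / 2 := by
          field_simp
        calc t ^ 2 * Lb ^ 2 = t * t * Lb ^ 2 := by ring
          _ ≤ t * (ε₀ / (2 * Lb ^ 2)) * Lb ^ 2 := h4
          _ = t * ε₀ / 2 := h5
      linarith
    set a : ℝ := t * ε₀ / 2 with hadef
    have ha : 0 < a := by positivity
    set r : ℝ := Real.exp (-a) with hrdef
    have hr0 : 0 < r := Real.exp_pos _
    have hr1 : r < 1 := Real.exp_lt_one_iff.2 (by linarith)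
    -- G3 : Borel-Cantelli on the uniform deviation events
    set Eset : ℕ → Set Ω := fun n =>
      {ω | ∃ i < n, (n : ℝ) * ε₀ ≤
        ∑ j ∈ Finset.range n, (R (Y'seq i ω) - ℓ (Yseq j ω) (Y'seq i ω))} with hEset
    have hEbound : ∀ n : ℕ, P (Eset n) ≤ ENNReal.ofReal ((n : ℝ) * r ^ n) := by
      intro n
      have hsub : Eset n ⊆ ⋃ i ∈ Finset.range n,
          {ω | (n : ℝ) * ε₀ ≤
            ∑ j ∈ Finset.range n, (R (Y'seq i ω) - ℓ (Yseq j ω) (Y'seq i ω))} := by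
        rintro ω ⟨i, hi, hbig⟩
        exact Set.mem_biUnion (Finset.mem_range.2 hi) hbig
      calc P (Eset n) ≤ ∑ i ∈ Finset.range n, P {ω | (n : ℝ) * ε₀ ≤
            ∑ j ∈ Finset.range n, (R (Y'seq i ω) - ℓ (Yseq j ω) (Y'seq i ω))} :=
            le_trans (measure_mono hsub) (measure_biUnion_finset_le _ _)
        _ ≤ ∑ _i ∈ Finset.range n, ENNReal.ofReal (Real.exp ((n : ℝ) * (t ^ 2 * Lb ^ 2 - t * ε₀))) := by
            refine Finset.sum_le_sum fun i hi => ?_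
            exact my_dev_bound μ P ℓ hℓmeas hL' hℓbdd Yseq Y'seq hYmeas hY'meas hYdist
              hY'dist hindep R hR ht.le htL n i (Finset.mem_range.1 hi)
        _ ≤ ∑ _i ∈ Finset.range n, ENNReal.ofReal (r ^ n) := by
            refine Finset.sum_le_sum fun i _ => ?_
            refine ENNReal.ofReal_le_ofReal ?_
            rw [hrdef, ← Real.exp_nat_mul]
            refine Real.exp_le_exp.2 ?_
            have : (n : ℝ) * (t ^ 2 * Lb ^ 2 - t * ε₀) ≤ (n : ℝ) * (-(t * ε₀ / 2)) := by
              refine mul_le_mul_of_nonneg_left htexp (Nat.cast_nonneg n)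
            calc (n : ℝ) * (t ^ 2 * Lb ^ 2 - t * ε₀) ≤ (n : ℝ) * (-(t * ε₀ / 2)) := this
              _ = (n : ℝ) * (-a) := by rw [hadef]
        _ = ENNReal.ofReal ((n : ℝ) * r ^ n) := by
            rw [Finset.sum_const, Finset.card_range, nsmul_eq_mul]
            rw [← ENNReal.ofReal_natCast n, ← ENNReal.ofReal_mul (Nat.cast_nonneg n)]
    have hsummable : Summable fun n : ℕ => (n : ℝ) * r ^ n := by
      have := summable_pow_mul_geometric_of_norm_lt_one 1
        (r := r) (by rw [Real.norm_eq_abs, abs_of_pos hr0]; exact hr1)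
      simpa using this
    have htsum : ∑' n, P (Eset n) ≠ ⊤ := by
      have h1 : ∑' n, P (Eset n) ≤ ∑' n : ℕ, ENNReal.ofReal ((n : ℝ) * r ^ n) :=
        ENNReal.tsum_le_tsum hEbound
      have h2 : ∑' n : ℕ, ENNReal.ofReal ((n : ℝ) * r ^ n)
          = ENNReal.ofReal (∑' n : ℕ, (n : ℝ) * r ^ n) :=
        (ENNReal.ofReal_tsum_of_nonneg (fun n => by positivity) hsummable).symm
      rw [h2] at h1
      exact ne_top_of_le_ne_top ENNReal.ofReal_ne_top h1
    have hG3 : ∀ᵐ ω ∂P, ∀ᶠ n in atTop, ω ∉ Eset n := by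
      have h0 := measure_limsup_atTop_eq_zero (μ := P) htsum
      have h1 : ∀ᵐ ω ∂P, ω ∉ limsup Eset atTop := by
        rw [ae_iff]
        simpa using h0
      filter_upwards [h1] with ω hω
      rw [mem_limsup_iff_frequently_mem, Filter.not_frequently] at hω
      exact hω
    -- G1 : strong law at mFr
    have hG1 : ∀ᵐ ω ∂P, Tendsto
        (fun n : ℕ => (n : ℝ)⁻¹ • ∑ j ∈ Finset.range n, ℓ (Yseq j ω) mFr)
        atTop (nhds (R mFr)) := by
      set X : ℕ → Ω → ℝ := fun j ω => ℓ (Yseq j ω) mFr with hXdef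
      have hXmeas : ∀ j, Measurable (X j) := fun j => (hℓy mFr).comp (hYmeas j)
      have hXint : Integrable (X 0) P :=
        my_integrable_of_abs_le (hXmeas 0) fun ω => hℓbdd _ _
      have hXindep : Pairwise (Function.onFun (IndepFun · · P) X) := by
        intro i j hij
        have h0 : IndepFun (Sum.elim Yseq Y'seq (Sum.inl i))
            (Sum.elim Yseq Y'seq (Sum.inl j)) P :=
          hindep.indepFun (by simp [hij])
        exact h0.comp (hℓy mFr) (hℓy mFr)
      have hXident : ∀ j, IdentDistrib (X j) (X 0) P P := by
        intro j
        have h0 : IdentDistrib (Yseq j) (Yseq 0) P P :=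
          ⟨(hYmeas j).aemeasurable, (hYmeas 0).aemeasurable, by rw [hYdist j, hYdist 0]⟩
        exact h0.comp (hℓy mFr)
      have hmean : ∫ ω, X 0 ω ∂P = R mFr := by
        rw [hXdef]
        have : ∫ ω, ℓ (Yseq 0 ω) mFr ∂P = ∫ z, ℓ z mFr ∂μ := by
          rw [← hYdist 0, integral_map (hYmeas 0).aemeasurable
            (hℓy mFr).aestronglyMeasurable]
        rw [this, ← hR mFr]
      have := strong_law_ae X hXint hXindep hXident
      rw [hmean] at this
      exact this
    -- G2 : infinitely many Y' hits of the ball B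
    have hG2 : ∀ᵐ ω ∂P, ∃ i, Y'seq i ω ∈ B := by
      set Xb : ℕ → Ω → ℝ := fun i ω => B.indicator (fun _ => (1 : ℝ)) (Y'seq i ω) with hXb
      have hIm : Measurable (B.indicator (fun _ => (1 : ℝ))) :=
        measurable_const.indicator hBmeas
      have hXbmeas : ∀ i, Measurable (Xb i) := fun i => hIm.comp (hY'meas i)
      have hXbint : Integrable (Xb 0) P := by
        refine my_integrable_of_abs_le (hXbmeas 0) (C := 1) fun ω => ?_
        rw [hXb]
        by_cases h : Y'seq 0 ω ∈ B <;> simp [Set.indicator_apply, h]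
      have hXbindep : Pairwise (Function.onFun (IndepFun · · P) Xb) := by
        intro i j hij
        have h0 : IndepFun (Sum.elim Yseq Y'seq (Sum.inr i))
            (Sum.elim Yseq Y'seq (Sum.inr j)) P :=
          hindep.indepFun (by simp [hij])
        exact h0.comp hIm hIm
      have hXbident : ∀ j, IdentDistrib (Xb j) (Xb 0) P P := by
        intro j
        have h0 : IdentDistrib (Y'seq j) (Y'seq 0) P P :=
          ⟨(hY'meas j).aemeasurable, (hY'meas 0).aemeasurable, by rw [hY'dist j, hY'dist 0]⟩
        exact h0.comp hIm
      have hmean : ∫ ω, Xb 0 ω ∂P = (μ B).toReal := by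
        rw [hXb]
        have h1 : ∫ ω, B.indicator (fun _ => (1 : ℝ)) (Y'seq 0 ω) ∂P
            = ∫ z, B.indicator (fun _ => (1 : ℝ)) z ∂μ := by
          rw [← hY'dist 0, integral_map (hY'meas 0).aemeasurable
            hIm.aestronglyMeasurable]
        rw [h1]
        rw [integral_indicator_const (1 : ℝ) hBmeas]
        simp [Measure.real]
      have hp : 0 < (μ B).toReal :=
        ENNReal.toReal_pos hμB.ne' (measure_ne_top μ B)
      have hsl := strong_law_ae Xb hXbint hXbindep hXbident
      rw [hmean] at hsl
      filter_upwards [hsl] with ω hω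
      by_contra hno
      push_neg at hno
      have hzero : ∀ n : ℕ, (n : ℝ)⁻¹ • ∑ i ∈ Finset.range n, Xb i ω = 0 := by
        intro n
        have : ∀ i ∈ Finset.range n, Xb i ω = 0 := by
          intro i _
          rw [hXb]
          simp [Set.indicator_apply, hno i]
        rw [Finset.sum_eq_zero this, smul_zero]
      have : Tendsto (fun n : ℕ => (n : ℝ)⁻¹ • ∑ i ∈ Finset.range n, Xb i ω)
          atTop (nhds 0) := by
        simp only [hzero]
        exact tendsto_const_nhds
      exact absurd (tendsto_nhds_unique hω this) hp.ne'
    -- combine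
    filter_upwards [hG1, hG2, hG3] with ω h1 h2 h3
    obtain ⟨i₀, hi₀⟩ := h2
    have h1' : ∀ᶠ n : ℕ in atTop,
        (n : ℝ)⁻¹ • ∑ j ∈ Finset.range n, ℓ (Yseq j ω) mFr < R mFr + ε₀ :=
      h1.eventually_lt_const (by linarith)
    filter_upwards [h1', h3, eventually_gt_atTop i₀] with n hn1 hn3 hni0
    have hn0 : 0 < n := Nat.lt_of_le_of_lt (Nat.zero_le i₀) hni0
    have hn0' : (0 : ℝ) < n := by exact_mod_cast hn0
    obtain ⟨i, hi, heq⟩ := hmem n ω hn0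
    -- A1 : from the deviation bound at index i
    have hA1 : (n : ℝ) * R (mbar n ω)
        < ∑ j ∈ Finset.range n, ℓ (Yseq j ω) (mbar n ω) + (n : ℝ) * ε₀ := by
      have hnot : ¬ ((n : ℝ) * ε₀ ≤
          ∑ j ∈ Finset.range n, (R (Y'seq i ω) - ℓ (Yseq j ω) (Y'seq i ω))) := by
        intro hcon
        exact hn3 ⟨i, hi, hcon⟩
      push_neg at hnot
      have hsplit : ∑ j ∈ Finset.range n, (R (Y'seq i ω) - ℓ (Yseq j ω) (Y'seq i ω))
          = (n : ℝ) * R (Y'seq i ω) - ∑ j ∈ Finset.range n, ℓ (Yseq j ω) (Y'seq i ω) := by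
        rw [Finset.sum_sub_distrib, Finset.sum_const, Finset.card_range, nsmul_eq_mul]
      rw [hsplit] at hnot
      rw [heq]
      linarith
    -- A2 : minimality of mbar over the Y' candidates
    have hA2 : ∑ j ∈ Finset.range n, ℓ (Yseq j ω) (mbar n ω)
        ≤ ∑ j ∈ Finset.range n, ℓ (Yseq j ω) (Y'seq i₀ ω) := hminz n ω hn0 i₀ hni0
    -- A3 : comparison of the hit candidate with mFr
    have hA3 : ∑ j ∈ Finset.range n, ℓ (Yseq j ω) (Y'seq i₀ ω)
        ≤ ∑ j ∈ Finset.range n, ℓ (Yseq j ω) mFr + (n : ℝ) * ε₀ := by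
      have hterm : ∀ j, ℓ (Yseq j ω) (Y'seq i₀ ω) ≤ ℓ (Yseq j ω) mFr + ε₀ := by
        intro j
        have h0 := htr (Yseq j ω) (Y'seq i₀ ω) mFr
        have h0' : ℓ (Yseq j ω) (Y'seq i₀ ω) - ℓ (Yseq j ω) mFr
            ≤ c * ℓ (Y'seq i₀ ω) mFr := (abs_le.1 h0).2
        have hcc' : c * ℓ (Y'seq i₀ ω) mFr ≤ c' * ℓ (Y'seq i₀ ω) mFr :=
          mul_le_mul_of_nonneg_right (le_max_left c 1) (hℓ0 _ _)
        have hdist : dist (Y'seq i₀ ω) mFr < δ := Metric.mem_ball.1 hi₀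
        have hlrb : ℓ (Y'seq i₀ ω) mFr ≤ δ ^ α := by
          refine (hlr _ _).trans ?_
          exact Real.rpow_le_rpow dist_nonneg hdist.le hα.le
        have : c' * ℓ (Y'seq i₀ ω) mFr ≤ c' * δ ^ α :=
          mul_le_mul_of_nonneg_left hlrb hc'.le
        linarith [hδbound]
      calc ∑ j ∈ Finset.range n, ℓ (Yseq j ω) (Y'seq i₀ ω)
          ≤ ∑ j ∈ Finset.range n, (ℓ (Yseq j ω) mFr + ε₀) :=
            Finset.sum_le_sum fun j _ => hterm j
        _ = ∑ j ∈ Finset.range n, ℓ (Yseq j ω) mFr + (n : ℝ) * ε₀ := by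
            rw [Finset.sum_add_distrib, Finset.sum_const, Finset.card_range, nsmul_eq_mul]
    -- A4 : the strong law bound
    have hA4 : ∑ j ∈ Finset.range n, ℓ (Yseq j ω) mFr < (n : ℝ) * (R mFr + ε₀) := by
      rw [smul_eq_mul] at hn1
      rwa [inv_mul_lt_iff₀ hn0'] at hn1
    have hfinal : (n : ℝ) * R (mbar n ω) < (n : ℝ) * (R mFr + ε) := by
      have : (n : ℝ) * (R mFr + ε₀) + (n : ℝ) * ε₀ + (n : ℝ) * ε₀
          = (n : ℝ) * (R mFr + ε) := by
        rw [hε₀def]; ring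
      linarith
    have := (mul_lt_mul_iff_right₀ hn0').1 hfinal
    linarith
  -- conclude
  have hkey : ∀ᵐ ω ∂P, ∀ k : ℕ,
      ∀ᶠ n in atTop, R (mbar n ω) ≤ R mFr + 1 / (k + 1) :=
    ae_all_iff.2 fun k => key _ (by positivity)
  filter_upwards [hkey] with ω hω
  rw [Metric.tendsto_atTop]
  intro ε hε
  obtain ⟨k, hk⟩ := exists_nat_one_div_lt hε
  obtain ⟨N, hN⟩ := eventually_atTop.1 (hω k)
  refine ⟨N, fun n hn => ?_⟩
  have h1 := hN n hn
  have h2 : R mFr ≤ R (mbar n ω) := hmFr _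
  rw [Real.dist_eq, abs_of_nonneg (by linarith)]
  have : (1 : ℝ) / (k + 1) < ε := by exact_mod_cast hk
  linarith
end

section
/- Let (Y, ρ) be a separable metric space, ℓ : Y × Y → [0, ∞) measurable with ℓ(y, y') ≤ L for all y, y', and let Y₁, Y₂, … and Y'₁, Y'₂, … be two mutually independent i.i.d. sequences with common distribution μ. For y ∈ Y set R(y) = E[ℓ(Y₁, y)] and R_n(y) = (1/n)·Σ_{i=1}^n ℓ(Y_i, y). If for each n, m̄_n is an element of {Y'₁, …, Y'ₙ} minimizing R_n over {Y'₁, …, Y'ₙ}, then R(m̄_n) − min_{1 ≤ i ≤ n} R(Y'_i) → 0 almost surely as n → ∞. -/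
open MeasureTheory ProbabilityTheory Filter

open Real in

/-- Hoeffding-type mgf bound for a centered variable bounded by `L`. -/
lemma mgf_le_of_abs_le {Y : Type*} [MeasurableSpace Y] (μ : Measure Y) [IsProbabilityMeasure μ]
    (g : Y → ℝ) (hg : Measurable g) (L : ℝ) (hL : 0 < L) (hb : ∀ z, |g z| ≤ L)
    (h0 : ∫ z, g z ∂μ = 0) (t : ℝ) :
    mgf g μ t ≤ exp (t ^ 2 * L ^ 2 / 2) := by
  have hgint : Integrable g μ := by
    refine (integrable_const L).mono' hg.aestronglyMeasurable ?_
    exact Filter.Eventually.of_forall fun z => by simpa using hb z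
  have key : ∀ x : ℝ, |x| ≤ L →
      exp (t * x) ≤ cosh (t * L) + x * ((exp (t * L) - exp (-(t * L))) / (2 * L)) := by
    intro x hx
    have hθ0 : 0 ≤ (L - x) / (2 * L) := by
      apply div_nonneg (by linarith [abs_le.mp hx]) (by linarith)
    have hθ1 : 0 ≤ (L + x) / (2 * L) := by
      apply div_nonneg (by linarith [abs_le.mp hx]) (by linarith)
    have hθs : (L - x) / (2 * L) + (L + x) / (2 * L) = 1 := by
      field_simp; ring
    have := (convexOn_exp.2 (Set.mem_univ (-(t * L))) (Set.mem_univ (t * L)) hθ0 hθ1 hθs)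
    simp only [smul_eq_mul] at this
    have harg : (L - x) / (2 * L) * (-(t * L)) + (L + x) / (2 * L) * (t * L) = t * x := by
      field_simp; ring
    rw [harg] at this
    refine this.trans (le_of_eq ?_)
    rw [Real.cosh_eq]
    field_simp
    ring
  calc mgf g μ t = ∫ z, exp (t * g z) ∂μ := rfl
    _ ≤ ∫ z, (cosh (t * L) + g z * ((exp (t * L) - exp (-(t * L))) / (2 * L))) ∂μ := by
        refine integral_mono ?_ ?_ (fun z => key (g z) (hb z))
        · refine (integrable_const (exp (|t| * L))).mono'
            ((hg.const_mul t).exp).aestronglyMeasurable ?_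
          refine Filter.Eventually.of_forall fun z => ?_
          rw [Real.norm_eq_abs, Real.abs_exp, Real.exp_le_exp]
          calc t * g z ≤ |t * g z| := le_abs_self _
            _ = |t| * |g z| := abs_mul _ _
            _ ≤ |t| * L := by gcongr; exact hb z
        · exact (integrable_const _).add (hgint.mul_const _)
    _ = cosh (t * L) := by
        rw [integral_add (integrable_const _) (hgint.mul_const _), integral_const,
          integral_mul_const, h0]
        simp
    _ ≤ exp ((t * L) ^ 2 / 2) := Real.cosh_le_exp_half_sq _
    _ = exp (t ^ 2 * L ^ 2 / 2) := by ring_nf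

open Real in

/-- One-sided Hoeffding tail bound for sums of i.i.d. centered bounded variables. -/
lemma onesided_tail {Y : Type*} [MeasurableSpace Y] (μ : Measure Y) [IsProbabilityMeasure μ]
    {Ω : Type*} [MeasurableSpace Ω] (P : Measure Ω) [IsProbabilityMeasure P]
    (F : ℕ ⊕ ℕ → Ω → Y) (hFmeas : ∀ k, Measurable (F k))
    (hindep : iIndepFun F P)
    (hdist : ∀ i : ℕ, Measure.map (F (Sum.inl i)) P = μ)
    (g : Y → ℝ) (hg : Measurable g) (L : ℝ) (hL : 0 < L) (hb : ∀ z, |g z| ≤ L)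
    (h0 : ∫ z, g z ∂μ = 0) (n : ℕ) (ε : ℝ) (hε : 0 < ε) :
    P {ω | (n : ℝ) * ε ≤ ∑ i ∈ Finset.range n, g (F (Sum.inl i) ω)} ≤
      ENNReal.ofReal (exp (-((n : ℝ) * ε ^ 2 / (2 * L ^ 2)))) := by
  set t : ℝ := ε / L ^ 2 with ht_def
  have ht : 0 ≤ t := le_of_lt (div_pos hε (by positivity))
  set X : ℕ ⊕ ℕ → Ω → ℝ := fun k ω => g (F k ω) with hX
  have hXindep : iIndepFun X P :=
    hindep.comp (fun _ => g) (fun _ => hg)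
  have hXmeas : ∀ k, Measurable (X k) := fun k => hg.comp (hFmeas k)
  set s : Finset (ℕ ⊕ ℕ) := (Finset.range n).map ⟨Sum.inl, Sum.inl_injective⟩ with hs
  set S : Ω → ℝ := fun ω => ∑ k ∈ s, X k ω with hS
  have hSeq : (∑ k ∈ s, X k) = S := by
    funext ω; rw [Finset.sum_apply]
  have hSval : ∀ ω, S ω = ∑ i ∈ Finset.range n, g (F (Sum.inl i) ω) := by
    intro ω
    rw [hS]
    simp only [hs, Finset.sum_map, Function.Embedding.coeFn_mk, hX]
  have hSmeas : Measurable S := by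
    rw [hS]; exact Finset.measurable_sum _ fun k _ => hXmeas k
  have hSbound : ∀ ω, |S ω| ≤ (n : ℝ) * L := by
    intro ω
    rw [hSval ω]
    calc |∑ i ∈ Finset.range n, g (F (Sum.inl i) ω)|
        ≤ ∑ i ∈ Finset.range n, |g (F (Sum.inl i) ω)| := Finset.abs_sum_le_sum_abs _ _
      _ ≤ ∑ _i ∈ Finset.range n, L := Finset.sum_le_sum fun i _ => hb _
      _ = (n : ℝ) * L := by simp [mul_comm]
  have h_int : Integrable (fun ω => exp (t * S ω)) P := by
    refine (integrable_const (exp (t * ((n : ℝ) * L)))).mono'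
      ((hSmeas.const_mul t).exp).aestronglyMeasurable ?_
    refine Filter.Eventually.of_forall fun ω => ?_
    rw [Real.norm_eq_abs, Real.abs_exp, Real.exp_le_exp]
    calc t * S ω ≤ t * |S ω| := by nlinarith [le_abs_self (S ω), abs_nonneg (S ω)]
      _ ≤ t * ((n : ℝ) * L) := by
          have := hSbound ω; nlinarith
  have hmgf_each : ∀ i : ℕ, mgf (X (Sum.inl i)) P t ≤ exp (t ^ 2 * L ^ 2 / 2) := by
    intro i
    have : mgf (X (Sum.inl i)) P t = mgf g μ t := by
      rw [mgf, mgf, ← hdist i,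
        integral_map (hFmeas (Sum.inl i)).aemeasurable
          ((hg.const_mul t).exp).aestronglyMeasurable]
    rw [this]
    exact mgf_le_of_abs_le μ g hg L hL hb h0 t
  have hmgf_sum : mgf S P t ≤ exp (t ^ 2 * L ^ 2 / 2) ^ n := by
    rw [← hSeq, hXindep.mgf_sum hXmeas s]
    calc ∏ k ∈ s, mgf (X k) P t
        ≤ ∏ _k ∈ s, exp (t ^ 2 * L ^ 2 / 2) := by
          refine Finset.prod_le_prod (fun k _ => mgf_nonneg) (fun k hk => ?_)
          rw [hs, Finset.mem_map] at hk
          obtain ⟨i, -, rfl⟩ := hk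
          exact hmgf_each i
      _ = exp (t ^ 2 * L ^ 2 / 2) ^ n := by
          rw [Finset.prod_const, hs, Finset.card_map, Finset.card_range]
  have hset : {ω | (n : ℝ) * ε ≤ ∑ i ∈ Finset.range n, g (F (Sum.inl i) ω)}
      = {ω | (n : ℝ) * ε ≤ S ω} := by
    ext ω; simp [hSval ω]
  rw [hset]
  have hmain := measure_ge_le_exp_mul_mgf (μ := P) (X := S) ((n : ℝ) * ε) ht h_int
  have hfin : P {ω | (n : ℝ) * ε ≤ S ω} ≠ ⊤ := measure_ne_top _ _
  rw [ENNReal.le_ofReal_iff_toReal_le hfin (exp_nonneg _)]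
  refine hmain.trans ?_
  calc exp (-t * ((n : ℝ) * ε)) * mgf S P t
      ≤ exp (-t * ((n : ℝ) * ε)) * exp (t ^ 2 * L ^ 2 / 2) ^ n := by
        exact mul_le_mul_of_nonneg_left hmgf_sum (exp_nonneg _)
    _ = exp (-t * ((n : ℝ) * ε) + (n : ℝ) * (t ^ 2 * L ^ 2 / 2)) := by
        rw [← Real.exp_nat_mul, ← Real.exp_add]
    _ = exp (-((n : ℝ) * ε ^ 2 / (2 * L ^ 2))) := by
        congr 1
        rw [ht_def]
        field_simp
        ring

open Real in

/-- Two-sided tail bound for the deviation of the empirical risk at a fixed point `y`. -/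
lemma twosided_tail {Y : Type*} [MeasurableSpace Y] (μ : Measure Y) [IsProbabilityMeasure μ]
    {Ω : Type*} [MeasurableSpace Ω] (P : Measure Ω) [IsProbabilityMeasure P]
    (ℓ : Y → Y → ℝ) (hℓmeas : Measurable fun p : Y × Y => ℓ p.1 p.2)
    (hℓ0 : ∀ y y', 0 ≤ ℓ y y') (L : ℝ) (hL : 0 < L) (hℓL : ∀ y y', ℓ y y' ≤ L)
    (F : ℕ ⊕ ℕ → Ω → Y) (hFmeas : ∀ k, Measurable (F k))
    (hindep : iIndepFun F P)
    (hdist : ∀ i : ℕ, Measure.map (F (Sum.inl i)) P = μ)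
    (R : Y → ℝ) (hR : ∀ y, R y = ∫ z, ℓ z y ∂μ)
    (y : Y) (n : ℕ) (hn : 0 < n) (ε : ℝ) (hε : 0 < ε) :
    P {ω | ε ≤ |(∑ i ∈ Finset.range n, ℓ (F (Sum.inl i) ω) y) / n - R y|} ≤
      2 * ENNReal.ofReal (exp (-((n : ℝ) * ε ^ 2 / (2 * L ^ 2)))) := by
  have hℓy_meas : Measurable fun z => ℓ z y := hℓmeas.comp (measurable_id.prodMk measurable_const)
  have hℓy_int : Integrable (fun z => ℓ z y) μ := by
    refine (integrable_const L).mono' hℓy_meas.aestronglyMeasurable ?_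
    exact Filter.Eventually.of_forall fun z => by
      rw [Real.norm_eq_abs, abs_of_nonneg (hℓ0 z y)]; exact hℓL z y
  have hR0 : 0 ≤ R y := by
    rw [hR]; exact integral_nonneg fun z => hℓ0 z y
  have hRL : R y ≤ L := by
    rw [hR]
    calc ∫ z, ℓ z y ∂μ ≤ ∫ _z, L ∂μ := integral_mono hℓy_int (integrable_const L)
          fun z => hℓL z y
      _ = L := by simp
  set g : Y → ℝ := fun z => ℓ z y - R y with hgdef
  have hg : Measurable g := hℓy_meas.sub measurable_const
  have hb : ∀ z, |g z| ≤ L := fun z => abs_le.mpr ⟨by simp only [hgdef]; nlinarith [hℓ0 z y],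
    by simp only [hgdef]; nlinarith [hℓL z y]⟩
  have h0 : ∫ z, g z ∂μ = 0 := by
    rw [hgdef]
    rw [integral_sub hℓy_int (integrable_const _), integral_const, ← hR y]
    simp
  have hbneg : ∀ z, |(-g) z| ≤ L := fun z => by rw [Pi.neg_apply, abs_neg]; exact hb z
  have h0neg : ∫ z, (-g) z ∂μ = 0 := by simp [integral_neg, h0]
  have hsub : {ω | ε ≤ |(∑ i ∈ Finset.range n, ℓ (F (Sum.inl i) ω) y) / n - R y|} ⊆
      {ω | (n : ℝ) * ε ≤ ∑ i ∈ Finset.range n, g (F (Sum.inl i) ω)} ∪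
      {ω | (n : ℝ) * ε ≤ ∑ i ∈ Finset.range n, (-g) (F (Sum.inl i) ω)} := by
    intro ω hω
    simp only [Set.mem_setOf_eq] at hω
    have hnpos : (0 : ℝ) < n := Nat.cast_pos.mpr hn
    have hsum : (∑ i ∈ Finset.range n, ℓ (F (Sum.inl i) ω) y) / n - R y
        = (∑ i ∈ Finset.range n, g (F (Sum.inl i) ω)) / n := by
      rw [Finset.sum_sub_distrib, Finset.sum_const, Finset.card_range, sub_div,
        nsmul_eq_mul, mul_div_cancel_left₀ _ hnpos.ne']
    rw [hsum, abs_div, abs_of_pos hnpos, le_div_iff₀ hnpos, mul_comm] at hω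
    rcases le_or_gt 0 (∑ i ∈ Finset.range n, g (F (Sum.inl i) ω)) with hpos | hneg
    · left
      simp only [Set.mem_setOf_eq]
      rwa [abs_of_nonneg hpos] at hω
    · right
      simp only [Set.mem_setOf_eq, Pi.neg_apply, Finset.sum_neg_distrib]
      rwa [abs_of_neg hneg] at hω
  calc P _ ≤ P ({ω | (n : ℝ) * ε ≤ ∑ i ∈ Finset.range n, g (F (Sum.inl i) ω)} ∪
        {ω | (n : ℝ) * ε ≤ ∑ i ∈ Finset.range n, (-g) (F (Sum.inl i) ω)}) := measure_mono hsub
    _ ≤ P {ω | (n : ℝ) * ε ≤ ∑ i ∈ Finset.range n, g (F (Sum.inl i) ω)} +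
        P {ω | (n : ℝ) * ε ≤ ∑ i ∈ Finset.range n, (-g) (F (Sum.inl i) ω)} := measure_union_le _ _
    _ ≤ ENNReal.ofReal (exp (-((n : ℝ) * ε ^ 2 / (2 * L ^ 2)))) +
        ENNReal.ofReal (exp (-((n : ℝ) * ε ^ 2 / (2 * L ^ 2)))) := by
        exact add_le_add
          (onesided_tail μ P F hFmeas hindep hdist g hg L hL hb h0 n ε hε)
          (onesided_tail μ P F hFmeas hindep hdist (-g) hg.neg L hL hbneg h0neg n ε hε)
    _ = 2 * ENNReal.ofReal (exp (-((n : ℝ) * ε ^ 2 / (2 * L ^ 2)))) := (two_mul _).symm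

open Real in

/-- Concentration of the empirical risk evaluated at the independent point `Y'seq j`. -/
lemma joint_tail {Y : Type*} [MeasurableSpace Y] (μ : Measure Y) [IsProbabilityMeasure μ]
    {Ω : Type*} [MeasurableSpace Ω] (P : Measure Ω) [IsProbabilityMeasure P]
    (ℓ : Y → Y → ℝ) (hℓmeas : Measurable fun p : Y × Y => ℓ p.1 p.2)
    (hℓ0 : ∀ y y', 0 ≤ ℓ y y') (L : ℝ) (hL : 0 < L) (hℓL : ∀ y y', ℓ y y' ≤ L)
    (Yseq Y'seq : ℕ → Ω → Y)
    (hYmeas : ∀ i, Measurable (Yseq i)) (hY'meas : ∀ i, Measurable (Y'seq i))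
    (hYdist : ∀ i, Measure.map (Yseq i) P = μ)
    (hY'dist : ∀ i, Measure.map (Y'seq i) P = μ)
    (hindep : iIndepFun (Sum.elim Yseq Y'seq) P)
    (R : Y → ℝ) (hR : ∀ y, R y = ∫ z, ℓ z y ∂μ) (hRmeas : Measurable R)
    (j n : ℕ) (hn : 0 < n) (ε : ℝ) (hε : 0 < ε) :
    P {ω | ε ≤ |(∑ i ∈ Finset.range n, ℓ (Yseq i ω) (Y'seq j ω)) / n - R (Y'seq j ω)|} ≤
      2 * ENNReal.ofReal (exp (-((n : ℝ) * ε ^ 2 / (2 * L ^ 2)))) := by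
  have hFmeas : ∀ k, Measurable (Sum.elim Yseq Y'seq k) := by
    intro k; cases k with
    | inl i => exact hYmeas i
    | inr i => exact hY'meas i
  -- the vector of the first n sample points
  set vec : Ω → (Fin n → Y) := fun ω i => Yseq i ω with hvec
  have hvecmeas : Measurable vec := measurable_pi_lambda _ fun i => hYmeas i
  -- independence of `Y'seq j` and `vec`
  have hIF : IndepFun (Y'seq j) vec P := by
    have hdisj : Disjoint ({Sum.inr j} : Finset (ℕ ⊕ ℕ))
        ((Finset.range n).map ⟨Sum.inl, Sum.inl_injective⟩) := by
      simp [Finset.disjoint_left]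
    have h1 := hindep.indepFun_finset _ _ hdisj hFmeas
    have hφ : Measurable fun v : (({Sum.inr j} : Finset (ℕ ⊕ ℕ)) : Set (ℕ ⊕ ℕ)) → Y =>
        v ⟨Sum.inr j, by simp⟩ := measurable_pi_apply _
    have hψ : Measurable fun v : (((Finset.range n).map
          ⟨Sum.inl, Sum.inl_injective⟩ : Finset (ℕ ⊕ ℕ)) : Set (ℕ ⊕ ℕ)) → Y =>
        (fun i : Fin n => v ⟨Sum.inl i, by simp [i.2]⟩) :=
      measurable_pi_lambda _ fun i => measurable_pi_apply _
    have := h1.comp hφ hψ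
    exact this
  have hmap : Measure.map (fun ω => (Y'seq j ω, vec ω)) P
      = μ.prod (Measure.map vec P) := by
    rw [(indepFun_iff_map_prod_eq_prod_map_map (hY'meas j).aemeasurable
      hvecmeas.aemeasurable).mp hIF, hY'dist j]
  set S₀ : Set (Y × (Fin n → Y)) :=
    {p | ε ≤ |(∑ i : Fin n, ℓ (p.2 i) p.1) / n - R p.1|} with hS₀
  have hS₀meas : MeasurableSet S₀ := by
    refine measurableSet_le measurable_const ((Measurable.sub ?_ ?_).abs)
    · exact (Finset.measurable_sum Finset.univ fun i _ =>
        hℓmeas.comp ((measurable_pi_apply i).comp measurable_snd |>.prodMk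
          measurable_fst)).div_const _
    · exact hRmeas.comp measurable_fst
  have hpre : {ω | ε ≤ |(∑ i ∈ Finset.range n, ℓ (Yseq i ω) (Y'seq j ω)) / n
      - R (Y'seq j ω)|} = (fun ω => (Y'seq j ω, vec ω)) ⁻¹' S₀ := by
    ext ω
    simp only [Set.mem_setOf_eq, Set.mem_preimage, hS₀, hvec]
    rw [Fin.sum_univ_eq_sum_range (fun i => ℓ (Yseq i ω) (Y'seq j ω)) n]
  rw [hpre, ← Measure.map_apply ((hY'meas j).prodMk hvecmeas) hS₀meas, hmap,
    Measure.prod_apply hS₀meas]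
  have hslice : ∀ y : Y, (Measure.map vec P) (Prod.mk y ⁻¹' S₀) ≤
      2 * ENNReal.ofReal (exp (-((n : ℝ) * ε ^ 2 / (2 * L ^ 2)))) := by
    intro y
    rw [Measure.map_apply hvecmeas (measurable_prodMk_left hS₀meas)]
    have hpre2 : vec ⁻¹' (Prod.mk y ⁻¹' S₀)
        = {ω | ε ≤ |(∑ i ∈ Finset.range n, ℓ (Sum.elim Yseq Y'seq (Sum.inl i) ω) y) / n
            - R y|} := by
      ext ω
      simp only [Set.mem_preimage, Set.mem_setOf_eq, hS₀, hvec, Sum.elim_inl]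
      rw [Fin.sum_univ_eq_sum_range (fun i => ℓ (Yseq i ω) y) n]
    rw [hpre2]
    exact twosided_tail μ P ℓ hℓmeas hℓ0 L hL hℓL (Sum.elim Yseq Y'seq) hFmeas hindep
      (fun i => hYdist i) R hR y n hn ε hε
  calc ∫⁻ y, (Measure.map vec P) (Prod.mk y ⁻¹' S₀) ∂μ
      ≤ ∫⁻ _y, 2 * ENNReal.ofReal (exp (-((n : ℝ) * ε ^ 2 / (2 * L ^ 2)))) ∂μ :=
        lintegral_mono hslice
    _ = 2 * ENNReal.ofReal (exp (-((n : ℝ) * ε ^ 2 / (2 * L ^ 2)))) := by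
        rw [lintegral_const, measure_univ, mul_one]

open Real in
/-- Almost-sure vanishing of the estimation error of the quantized
Fréchet mean estimator: with `Y₁, Y₂, …` and `Y'₁, Y'₂, …` mutually independent i.i.d.
sequences with distribution `μ`, bounded measurable loss `0 ≤ ℓ ≤ L`, risk
`R(y) = E[ℓ(Y₁, y)]`, empirical risk `Rₙ(y) = (1/n)·Σ_{i=1}^n ℓ(Yᵢ, y)`, and `m̄ₙ` an
element of `{Y'₁, …, Y'ₙ}` minimizing `Rₙ` over `{Y'₁, …, Y'ₙ}`, one has
`R(m̄ₙ) − min_{1 ≤ i ≤ n} R(Y'ᵢ) → 0` almost surely. -/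
theorem estimation_error_tendsto_zero
    {Y : Type*} [MetricSpace Y] [TopologicalSpace.SeparableSpace Y]
    [MeasurableSpace Y] [BorelSpace Y]
    (μ : Measure Y) [IsProbabilityMeasure μ]
    {Ω : Type*} [MeasurableSpace Ω] (P : Measure Ω) [IsProbabilityMeasure P]
    (ℓ : Y → Y → ℝ) (hℓmeas : Measurable fun p : Y × Y => ℓ p.1 p.2)
    (hℓ0 : ∀ y y', 0 ≤ ℓ y y') (L : ℝ) (hℓL : ∀ y y', ℓ y y' ≤ L)
    (Yseq Y'seq : ℕ → Ω → Y)
    (hYmeas : ∀ i, Measurable (Yseq i)) (hY'meas : ∀ i, Measurable (Y'seq i))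
    (hYdist : ∀ i, Measure.map (Yseq i) P = μ)
    (hY'dist : ∀ i, Measure.map (Y'seq i) P = μ)
    (hindep : iIndepFun (Sum.elim Yseq Y'seq) P)
    (R : Y → ℝ) (hR : ∀ y, R y = ∫ z, ℓ z y ∂μ)
    (mbar : ℕ → Ω → Y)
    (hmem : ∀ n (ω : Ω), 0 < n → ∃ i < n, mbar n ω = Y'seq i ω)
    (hminz : ∀ n (ω : Ω), 0 < n → ∀ i < n,
      ∑ j ∈ Finset.range n, ℓ (Yseq j ω) (mbar n ω)
        ≤ ∑ j ∈ Finset.range n, ℓ (Yseq j ω) (Y'seq i ω)) :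
    ∀ᵐ ω ∂P, Tendsto
      (fun n => R (mbar (n + 1) ω) -
        (Finset.range (n + 1)).inf' Finset.nonempty_range_add_one fun i => R (Y'seq i ω))
      atTop (nhds 0) := by
  -- trivial case `L ≤ 0`: the loss vanishes identically
  rcases le_or_gt L 0 with hL | hL
  · have hzero : ∀ y y', ℓ y y' = 0 := fun y y' =>
      le_antisymm ((hℓL y y').trans hL) (hℓ0 y y')
    have hR0 : ∀ y, R y = 0 := fun y => by simp [hR y, hzero]
    refine Filter.Eventually.of_forall fun ω => ?_
    have : (fun n => R (mbar (n + 1) ω) -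
        (Finset.range (n + 1)).inf' Finset.nonempty_range_add_one fun i => R (Y'seq i ω))
        = fun _ => 0 := by
      funext n
      rw [hR0]
      have : ((Finset.range (n + 1)).inf' Finset.nonempty_range_add_one
          fun i => R (Y'seq i ω)) = 0 := by
        obtain ⟨i₀, hi₀, hval⟩ := Finset.exists_mem_eq_inf' Finset.nonempty_range_add_one
          (fun i => R (Y'seq i ω))
        rw [hval, hR0]
      rw [this, sub_zero]
    rw [this]
    exact tendsto_const_nhds
  -- main case `0 < L`
  have hRmeas : Measurable R := by
    have hsm : StronglyMeasurable fun p : Y × Y => ℓ p.2 p.1 :=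
      (hℓmeas.comp measurable_swap).stronglyMeasurable
    have := hsm.integral_prod_right' (ν := μ)
    have heq : R = fun y => ∫ z, ℓ z y ∂μ := funext hR
    rw [heq]
    exact this.measurable
  -- the bad events
  set A : ℕ → ℕ → ℝ → Set Ω := fun n j δ =>
    {ω | δ ≤ |(∑ i ∈ Finset.range n, ℓ (Yseq i ω) (Y'seq j ω)) / n - R (Y'seq j ω)|} with hA
  set E : ℕ → ℝ → Set Ω := fun n δ => ⋃ j ∈ Finset.range n, A n j δ with hE
  have hEbound : ∀ (n : ℕ) (δ : ℝ), 0 < δ →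
      P (E n δ) ≤ (n : ENNReal) * (2 * ENNReal.ofReal (exp (-((n : ℝ) * δ ^ 2 / (2 * L ^ 2))))) := by
    intro n δ hδ
    calc P (E n δ) ≤ ∑ j ∈ Finset.range n, P (A n j δ) := measure_biUnion_finset_le _ _
      _ ≤ ∑ _j ∈ Finset.range n, (2 * ENNReal.ofReal (exp (-((n : ℝ) * δ ^ 2 / (2 * L ^ 2))))) :=
          Finset.sum_le_sum fun j hj => joint_tail μ P ℓ hℓmeas hℓ0 L hL hℓL Yseq Y'seq
            hYmeas hY'meas hYdist hY'dist hindep R hR hRmeas j n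
            (lt_of_le_of_lt (Nat.zero_le j) (Finset.mem_range.mp hj)) δ hδ
      _ = (n : ENNReal) * (2 * ENNReal.ofReal (exp (-((n : ℝ) * δ ^ 2 / (2 * L ^ 2))))) := by
          rw [Finset.sum_const, Finset.card_range, nsmul_eq_mul]
  -- Borel--Cantelli for each level `δₖ = 1/(k+1)`
  have hBC : ∀ k : ℕ, P (limsup (fun n => E n (1 / ((k : ℝ) + 1))) atTop) = 0 := by
    intro k
    set δ : ℝ := 1 / ((k : ℝ) + 1) with hδdef
    have hδ : 0 < δ := by positivity
    apply measure_limsup_atTop_eq_zero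
    set c : ℝ := δ ^ 2 / (2 * L ^ 2) with hc
    have hcpos : 0 < c := by positivity
    set r : ℝ := exp (-c) with hr
    have hr0 : 0 ≤ r := exp_nonneg _
    have hr1 : r < 1 := exp_lt_one_iff.mpr (by linarith)
    have hsummable : Summable (fun n : ℕ => (n : ℝ) * (2 * r ^ n)) := by
      have := summable_pow_mul_geometric_of_norm_lt_one (R := ℝ) 1
        (r := r) (by rwa [Real.norm_eq_abs, abs_of_nonneg hr0])
      simpa [mul_comm, mul_assoc, mul_left_comm, pow_one] using this.mul_left 2
    have hterm : ∀ n : ℕ, P (E n δ) ≤ ENNReal.ofReal ((n : ℝ) * (2 * r ^ n)) := by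
      intro n
      refine (hEbound n δ hδ).trans (le_of_eq ?_)
      have h1 : exp (-((n : ℝ) * δ ^ 2 / (2 * L ^ 2))) = r ^ n := by
        rw [hr, ← Real.exp_nat_mul]
        congr 1
        rw [hc]; ring
      rw [h1, ENNReal.ofReal_mul (Nat.cast_nonneg n), ENNReal.ofReal_mul (by norm_num : (0:ℝ) ≤ 2),
        ENNReal.ofReal_natCast, ENNReal.ofReal_ofNat]
    have hle : (∑' n, P (E n δ)) ≤ ENNReal.ofReal (∑' n : ℕ, (n : ℝ) * (2 * r ^ n)) := by
      rw [ENNReal.ofReal_tsum_of_nonneg (fun n => by positivity) hsummable]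
      exact ENNReal.tsum_le_tsum hterm
    exact ne_top_of_le_ne_top ENNReal.ofReal_ne_top hle
  -- the almost-sure good set
  have hae : ∀ᵐ ω ∂P, ∀ k : ℕ, ω ∉ limsup (fun n => E n (1 / ((k : ℝ) + 1))) atTop := by
    rw [ae_all_iff]
    intro k
    exact compl_mem_ae_iff.mpr (hBC k)
  filter_upwards [hae] with ω hω
  -- deterministic conclusion
  rw [Metric.tendsto_atTop]
  intro ε hε
  obtain ⟨k, hk⟩ := exists_nat_gt (2 / ε)
  have hkε : 2 / ((k : ℝ) + 1) < ε := by
    rw [div_lt_iff₀ (by positivity)]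
    rw [div_lt_iff₀ hε] at hk
    nlinarith
  have h1 := hω k
  rw [limsup_eq_iInf_iSup_of_nat] at h1
  simp only [Set.iInf_eq_iInter, Set.iSup_eq_iUnion, Set.mem_iInter, Set.mem_iUnion,
    not_forall, not_exists] at h1
  obtain ⟨N, hN⟩ := h1
  refine ⟨N, fun n hn => ?_⟩
  set m : ℕ := n + 1 with hm
  have hmN : N ≤ m := le_trans hn (Nat.le_succ n)
  have hgood := hN m hmN
  have hgood' : ∀ j < m, |(∑ i ∈ Finset.range m, ℓ (Yseq i ω) (Y'seq j ω)) / m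
      - R (Y'seq j ω)| < 1 / ((k : ℝ) + 1) := by
    intro j hj
    by_contra hcon
    push_neg at hcon
    exact hgood (Set.mem_biUnion (Finset.mem_range.mpr hj) hcon)
  have hmpos : 0 < m := Nat.succ_pos n
  set δ : ℝ := 1 / ((k : ℝ) + 1) with hδdef
  -- the minimizer among the candidates and the best candidate
  obtain ⟨j, hj, hmb⟩ := hmem m ω hmpos
  obtain ⟨i₀, hi₀mem, hi₀⟩ := Finset.exists_mem_eq_inf' (Finset.nonempty_range_add_one)
    (fun i => R (Y'seq i ω))
  have hi₀lt : i₀ < m := Finset.mem_range.mp hi₀mem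
  set I : ℝ := (Finset.range m).inf' Finset.nonempty_range_add_one fun i => R (Y'seq i ω) with hI
  have hlow : I ≤ R (mbar m ω) := by
    rw [hmb]
    exact Finset.inf'_le _ (Finset.mem_range.mpr hj)
  have hup : R (mbar m ω) < I + 2 * δ := by
    set Rn : Y → ℝ := fun y => (∑ i ∈ Finset.range m, ℓ (Yseq i ω) y) / m with hRn_def
    have h1 : R (mbar m ω) < Rn (Y'seq j ω) + δ := by
      have := (abs_lt.mp (hgood' j hj)).1
      rw [hmb]
      simp only [hRn_def]
      linarith
    have h2 : Rn (Y'seq j ω) ≤ Rn (Y'seq i₀ ω) := by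
      simp only [hRn_def]
      have hmz := hminz m ω hmpos i₀ hi₀lt
      rw [hmb] at hmz
      gcongr
    have h3 : Rn (Y'seq i₀ ω) < R (Y'seq i₀ ω) + δ := by
      have := (abs_lt.mp (hgood' i₀ hi₀lt)).2
      simp only [hRn_def] at this ⊢
      linarith
    have hIeq : I = R (Y'seq i₀ ω) := hi₀
    linarith
  show dist (R (mbar m ω) - I) 0 < ε
  rw [Real.dist_eq, sub_zero, abs_of_nonneg (by linarith)]
  have : 2 * δ = 2 / ((k : ℝ) + 1) := by rw [hδdef]; ring
  linarith
end

section
/- Let (Y, ρ) be a separable metric space, μ a Borel probability measure on Y with support S, and ℓ : Y × Y → [0, ∞) measurable with ℓ ≤ L, satisfying |ℓ(y, y') − ℓ(y, y'')| ≤ c·ℓ(y', y'') for all y, y', y'' and a finite constant c, and ℓ(y, y') ≤ ρ(y, y')^α for some α > 0. Let Y'₁, Y'₂, … be i.i.d. with distribution μ, set R(y) = E[ℓ(Y'₁, y)], and suppose R attains its minimum over S. Then min_{1 ≤ i ≤ n} R(Y'_i) → min_{y ∈ S} R(y) almost surely as n → ∞. -/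
open MeasureTheory ProbabilityTheory Filter

lemma isOpen_compl_measureSupport {Y : Type*} [MetricSpace Y] [MeasurableSpace Y]
    (μ : Measure Y) : IsOpen (measureSupport μ)ᶜ := by
  rw [isOpen_iff_mem_nhds]
  intro x hx
  simp only [measureSupport, Set.mem_compl_iff, Set.mem_setOf_eq, not_forall] at hx
  obtain ⟨ε, hε, hμε⟩ := hx
  have hμε' : μ (Metric.ball x ε) = 0 := by simpa using hμε
  filter_upwards [Metric.ball_mem_nhds x (half_pos hε)] with z hz
  intro hzS
  have hsub : Metric.ball z (ε / 2) ⊆ Metric.ball x ε := by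
    intro w hw
    have := dist_triangle w z x
    simp only [Metric.mem_ball] at *
    linarith
  have h0 : μ (Metric.ball z (ε / 2)) = 0 :=
    le_antisymm (hμε' ▸ measure_mono hsub) zero_le
  exact absurd (hzS (ε / 2) (half_pos hε)) (by simp [h0])

lemma measure_compl_measureSupport {Y : Type*} [MetricSpace Y]
    [TopologicalSpace.SeparableSpace Y] [MeasurableSpace Y] [BorelSpace Y]
    (μ : Measure Y) : μ (measureSupport μ)ᶜ = 0 := by
  haveI : SecondCountableTopology Y :=
    UniformSpace.secondCountable_of_separable Y
  refine measure_null_of_locally_null _ fun x hx => ?_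
  simp only [measureSupport, Set.mem_compl_iff, Set.mem_setOf_eq, not_forall] at hx
  obtain ⟨ε, hε, hμε⟩ := hx
  have hμε' : μ (Metric.ball x ε) = 0 := by simpa using hμε
  exact ⟨Metric.ball x ε,
    mem_nhdsWithin_of_mem_nhds (Metric.ball_mem_nhds x hε), hμε'⟩

/-- Almost-sure vanishing of the approximation error of the quantized
Fréchet mean estimator: if `Y'₁, Y'₂, …` are i.i.d. with distribution `μ`, the bounded
loss satisfies conditions (tr) and (lr), `R(y) = E[ℓ(Y'₁, y)]`, and `R` attains its
minimum over the support `S` at `ỹ ∈ S`, then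
`min_{1 ≤ i ≤ n} R(Y'ᵢ) → min_{y ∈ S} R(y)` almost surely. -/
theorem min_risk_over_sample_tendsto_min_over_support
    {Y : Type*} [MetricSpace Y] [TopologicalSpace.SeparableSpace Y]
    [MeasurableSpace Y] [BorelSpace Y]
    (μ : Measure Y) [IsProbabilityMeasure μ]
    {Ω : Type*} [MeasurableSpace Ω] (P : Measure Ω) [IsProbabilityMeasure P]
    (ℓ : Y → Y → ℝ) (hℓmeas : Measurable fun p : Y × Y => ℓ p.1 p.2)
    (hℓ0 : ∀ y y', 0 ≤ ℓ y y') (L : ℝ) (hℓL : ∀ y y', ℓ y y' ≤ L)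
    (c : ℝ) (htr : ∀ y y' y'', |ℓ y y' - ℓ y y''| ≤ c * ℓ y' y'')
    (α : ℝ) (hα : 0 < α) (hlr : ∀ y y', ℓ y y' ≤ dist y y' ^ α)
    (Y' : ℕ → Ω → Y) (hmeas : ∀ i, Measurable (Y' i))
    (hdist : ∀ i, Measure.map (Y' i) P = μ)
    (hindep : iIndepFun Y' P)
    (R : Y → ℝ) (hR : ∀ y, R y = ∫ z, ℓ z y ∂μ)
    (ytil : Y) (hytil : ytil ∈ measureSupport μ)
    (hmin : ∀ y ∈ measureSupport μ, R ytil ≤ R y) :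
    ∀ᵐ ω ∂P, Tendsto
      (fun n => (Finset.range (n + 1)).inf' Finset.nonempty_range_add_one
        fun i => R (Y' i ω))
      atTop (nhds (R ytil)) := by
  classical
  set S := measureSupport μ with hS
  -- almost surely all samples lie in the support
  have hScompl_meas : MeasurableSet Sᶜ := (isOpen_compl_measureSupport μ).measurableSet
  have hallS : ∀ᵐ ω ∂P, ∀ i, Y' i ω ∈ S := by
    rw [ae_all_iff]
    intro i
    have h0 : P (Y' i ⁻¹' Sᶜ) = 0 :=
      calc P (Y' i ⁻¹' Sᶜ) = (Measure.map (Y' i) P) Sᶜ :=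
            (Measure.map_apply (hmeas i) hScompl_meas).symm
        _ = μ Sᶜ := by rw [hdist i]
        _ = 0 := measure_compl_measureSupport μ
    rw [ae_iff]
    exact h0
  -- continuity-type bound for R
  set c' : ℝ := max c 0 with hc'
  have hc'0 : 0 ≤ c' := le_max_right _ _
  have hintegrable : ∀ y : Y, Integrable (fun z => ℓ z y) μ := by
    intro y
    have hm : Measurable fun z => ℓ z y :=
      hℓmeas.comp (measurable_id.prodMk measurable_const)
    refine Integrable.mono' (integrable_const L) hm.aestronglyMeasurable ?_
    filter_upwards with z
    rw [Real.norm_eq_abs, abs_of_nonneg (hℓ0 z y)]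
    exact hℓL z y
  have hRlip : ∀ y y' : Y, |R y - R y'| ≤ c' * ℓ y y' := by
    intro y y'
    rw [hR y, hR y', ← integral_sub (hintegrable y) (hintegrable y')]
    calc |∫ z, (ℓ z y - ℓ z y') ∂μ| ≤ ∫ z, |ℓ z y - ℓ z y'| ∂μ := by
          simpa [Real.norm_eq_abs] using
            norm_integral_le_integral_norm (fun z => ℓ z y - ℓ z y') (μ := μ)
      _ ≤ ∫ _z, c' * ℓ y y' ∂μ := by
          refine integral_mono ((hintegrable y).sub (hintegrable y')).abs
            (integrable_const _) fun z => ?_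
          exact (htr z y y').trans (mul_le_mul_of_nonneg_right (le_max_left _ _) (hℓ0 _ _))
      _ = c' * ℓ y y' := by simp
  -- radii
  set δ : ℕ → ℝ := fun k => (((k : ℝ) + 1)⁻¹ * (c' + 1)⁻¹) ^ (α⁻¹) with hδ
  have hk1 : ∀ k : ℕ, (0:ℝ) < ((k : ℝ) + 1)⁻¹ * (c' + 1)⁻¹ := fun k =>
    mul_pos (inv_pos.2 (by positivity)) (inv_pos.2 (by linarith))
  have hδpos : ∀ k, 0 < δ k := fun k => Real.rpow_pos_of_pos (hk1 k) _
  have hkey : ∀ k : ℕ, ∀ y : Y, dist y ytil < δ k → R y ≤ R ytil + ((k : ℝ) + 1)⁻¹ := by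
    intro k y hy
    have h1 : R y - R ytil ≤ c' * ℓ y ytil :=
      (le_abs_self _).trans (hRlip y ytil)
    have h2 : ℓ y ytil ≤ dist y ytil ^ α := hlr y ytil
    have h3 : dist y ytil ^ α ≤ (δ k) ^ α :=
      Real.rpow_le_rpow dist_nonneg hy.le hα.le
    have h4 : (δ k) ^ α = ((k : ℝ) + 1)⁻¹ * (c' + 1)⁻¹ := by
      show ((((k : ℝ) + 1)⁻¹ * (c' + 1)⁻¹) ^ (α⁻¹)) ^ α = _
      rw [← Real.rpow_mul (hk1 k).le, inv_mul_cancel₀ hα.ne', Real.rpow_one]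
    have h5 : c' * (((k : ℝ) + 1)⁻¹ * (c' + 1)⁻¹) ≤ ((k : ℝ) + 1)⁻¹ := by
      rw [mul_comm (((k : ℝ) + 1)⁻¹) _, ← mul_assoc]
      have : c' * (c' + 1)⁻¹ ≤ 1 := by
        rw [mul_inv_le_iff₀ (by linarith)]; linarith
      calc c' * (c' + 1)⁻¹ * ((k : ℝ) + 1)⁻¹ ≤ 1 * ((k : ℝ) + 1)⁻¹ :=
            mul_le_mul_of_nonneg_right this (by positivity)
        _ = ((k : ℝ) + 1)⁻¹ := one_mul _
    nlinarith [mul_le_mul_of_nonneg_left (h2.trans (h3.trans_eq h4)) hc'0]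
  -- a.s. for each k some sample is within δ k of ytil
  have hhit : ∀ᵐ ω ∂P, ∀ k : ℕ, ∃ i : ℕ, dist (Y' i ω) ytil < δ k := by
    rw [ae_all_iff]
    intro k
    set B : Set Y := Metric.ball ytil (δ k) with hB
    have hμB : 0 < μ B := hytil (δ k) (hδpos k)
    set s : ℕ → Set Ω := fun i => Y' i ⁻¹' B with hs
    have hsm : ∀ i, MeasurableSet (s i) := fun i => (hmeas i) Metric.isOpen_ball.measurableSet
    have hsind : iIndepSet s P := by
      have h1 : iIndep (fun i => MeasurableSpace.comap (Y' i) inferInstance) P :=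
        (iIndepFun_iff_iIndep _ _ _).1 hindep
      refine h1.iIndepSets'.iIndepSet_of_mem (fun i => ?_) hsm
      exact ⟨B, Metric.isOpen_ball.measurableSet, rfl⟩
    have hPs : ∀ i, P (s i) = μ B := fun i =>
      calc P (s i) = (Measure.map (Y' i) P) B :=
            (Measure.map_apply (hmeas i) Metric.isOpen_ball.measurableSet).symm
        _ = μ B := by rw [hdist i]
    have hsum : (∑' i, P (s i)) = ⊤ := by
      simp only [hPs]
      exact ENNReal.tsum_const_eq_top_of_ne_zero hμB.ne'
    have hlim := measure_limsup_eq_one hsm hsind hsum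
    have hae : ∀ᵐ ω ∂P, ω ∈ limsup s atTop := by
      rw [ae_iff_measure_eq]
      · simpa using hlim
      · exact (MeasurableSet.measurableSet_limsup fun i => hsm i).nullMeasurableSet
    filter_upwards [hae] with ω hω
    obtain ⟨i, hi⟩ := (mem_limsup_iff_frequently_mem.1 hω).exists
    exact ⟨i, by simpa [hs, hB, Metric.mem_ball] using hi⟩
  -- conclusion
  filter_upwards [hallS, hhit] with ω hωS hωhit
  have hlow : ∀ n, R ytil ≤ (Finset.range (n + 1)).inf' Finset.nonempty_range_add_one
      fun i => R (Y' i ω) := fun n =>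
    Finset.le_inf' _ _ fun i _ => hmin _ (hωS i)
  rw [tendsto_order]
  constructor
  · intro b hb
    filter_upwards with n
    exact hb.trans_le (hlow n)
  · intro b hb
    obtain ⟨k, hk⟩ := exists_nat_one_div_lt (sub_pos.2 hb)
    obtain ⟨i₀, hi₀⟩ := hωhit k
    filter_upwards [eventually_ge_atTop i₀] with n hn
    have hmem : i₀ ∈ Finset.range (n + 1) := Finset.mem_range.2 (by omega)
    have h1 : ((Finset.range (n + 1)).inf' Finset.nonempty_range_add_one
        fun i => R (Y' i ω)) ≤ R (Y' i₀ ω) := Finset.inf'_le _ hmem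
    have h2 : R (Y' i₀ ω) ≤ R ytil + ((k : ℝ) + 1)⁻¹ := hkey k _ hi₀
    have h3 : ((k : ℝ) + 1)⁻¹ < b - R ytil := by
      rwa [one_div] at hk
    linarith
end

section
/- Let (Y, ρ) be a separable metric space, μ a Borel probability measure on Y with support S, and Y'₁, Y'₂, … i.i.d. random elements with distribution μ. Then for every y ∈ S, min_{1 ≤ i ≤ n} ρ(Y'_i, y) → 0 almost surely as n → ∞; that is, the nearest neighbor of y among Y'₁, …, Y'ₙ converges to y almost surely. -/
open MeasureTheory ProbabilityTheory Filter

/-- **Cover–Hart lemma.** If `Y'₁, Y'₂, …` are i.i.d. with distribution `μ`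
on a separable metric space, then for every `y` in the support of `μ`, the distance from
`y` to its nearest neighbor among `Y'₁, …, Y'ₙ` converges to `0` almost surely. -/
theorem nearest_neighbor_dist_tendsto_zero
    {Y : Type*} [MetricSpace Y] [TopologicalSpace.SeparableSpace Y]
    [MeasurableSpace Y] [BorelSpace Y]
    (μ : Measure Y) [IsProbabilityMeasure μ]
    {Ω : Type*} [MeasurableSpace Ω] (P : Measure Ω) [IsProbabilityMeasure P]
    (Y' : ℕ → Ω → Y) (hmeas : ∀ i, Measurable (Y' i))
    (hdist : ∀ i, Measure.map (Y' i) P = μ)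
    (hindep : iIndepFun Y' P) :
    ∀ y ∈ measureSupport μ,
      ∀ᵐ ω ∂P, Tendsto
        (fun n => (Finset.range (n + 1)).inf' Finset.nonempty_range_add_one
          fun i => dist (Y' i ω) y)
        atTop (nhds 0) := by
  intro y hy
  have key : ∀ ε : ℝ, 0 < ε → ∀ᵐ ω ∂P, ∃ i, dist (Y' i ω) y < ε := by
    intro ε hε
    set s : Set Y := {x | ε ≤ dist x y} with hs_def
    have hs_closed : IsClosed s :=
      isClosed_le continuous_const (continuous_id.dist continuous_const)
    have hs : MeasurableSet s := hs_closed.measurableSet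
    have hq : μ s < 1 := by
      have hcompl : s = (Metric.ball y ε)ᶜ := by
        ext x; simp [hs_def, Metric.mem_ball, not_lt]
      rw [hcompl, measure_compl Metric.isOpen_ball.measurableSet (measure_ne_top μ _),
        measure_univ]
      exact ENNReal.sub_lt_self ENNReal.one_ne_top one_ne_zero (hy ε hε).ne'
    have hPi : ∀ i, P ((Y' i) ⁻¹' s) = μ s := by
      intro i
      rw [← hdist i, Measure.map_apply (hmeas i) hs]
    have hB : ∀ n, P (⋂ i ∈ Finset.range (n + 1), (Y' i) ⁻¹' s) = (μ s) ^ (n + 1) := by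
      intro n
      rw [(iIndepFun_iff_measure_inter_preimage_eq_mul.mp hindep) (Finset.range (n + 1))
        (fun i _ => hs)]
      simp [hPi]
    have hC : P {ω | ∀ i, ε ≤ dist (Y' i ω) y} = 0 := by
      have hle : ∀ n, P {ω | ∀ i, ε ≤ dist (Y' i ω) y} ≤ (μ s) ^ (n + 1) := by
        intro n
        refine (measure_mono ?_).trans_eq (hB n)
        intro ω hω
        simp only [Set.mem_iInter]
        exact fun i _ => hω i
      have htend : Tendsto (fun n : ℕ => (μ s) ^ (n + 1)) atTop (nhds 0) :=
        (ENNReal.tendsto_pow_atTop_nhds_zero_of_lt_one hq).comp (tendsto_add_atTop_nat 1)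
      exact le_antisymm (ge_of_tendsto' htend hle) zero_le
    rw [ae_iff]
    simpa only [not_exists, not_lt] using hC
  have hall : ∀ᵐ ω ∂P, ∀ k : ℕ, ∃ i, dist (Y' i ω) y < 1 / ((k : ℝ) + 1) := by
    rw [ae_all_iff]
    intro k
    exact key _ (by positivity)
  filter_upwards [hall] with ω hω
  rw [Metric.tendsto_atTop]
  intro ε hε
  obtain ⟨k, hk⟩ := exists_nat_one_div_lt hε
  obtain ⟨i, hi⟩ := hω k
  refine ⟨i, fun n hn => ?_⟩
  have hnonneg : 0 ≤ (Finset.range (n + 1)).inf' Finset.nonempty_range_add_one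
      (fun j => dist (Y' j ω) y) :=
    Finset.le_inf' _ _ (fun j _ => dist_nonneg)
  have hle : (Finset.range (n + 1)).inf' Finset.nonempty_range_add_one
      (fun j => dist (Y' j ω) y) ≤ dist (Y' i ω) y :=
    Finset.inf'_le _ (Finset.mem_range.mpr (Nat.lt_succ_of_le hn))
  rw [Real.dist_eq, sub_zero, abs_of_nonneg hnonneg]
  exact lt_trans (lt_of_le_of_lt hle hi) hk
end
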